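/- Let h³ = [[1,0],[0,-1]] and h⁴ = [[0,1],[1,0]]. For A ∈ GL(2,ℝ), the span of (Aᵀh³A, Aᵀh⁴A) equals the span of (h³, h⁴) (i.e., the space of trace-free symmetric 2×2 matrices) if and only if A = λA₀ for some λ ≠ 0 and A₀ ∈ O(2,ℝ). -/

import Mathlib

open Matrix

private lemma mem_plane_iff (M : Matrix (Fin 2) (Fin 2) ℝ) :
    M ∈ Submodule.span ℝ
        ({!![(1 : ℝ), 0; 0, -1], !![(0 : ℝ), 1; 1, 0]} :
          Set (Matrix (Fin 2) (Fin 2) ℝ)) ↔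
      M 1 1 = -M 0 0 ∧ M 1 0 = M 0 1 := by
  rw [Submodule.mem_span_pair]
  constructor
  · rintro ⟨x, y, rfl⟩
    constructor <;> simp
  · rintro ⟨h1, h2⟩
    refine ⟨M 0 0, M 0 1, ?_⟩
    ext i j
    fin_cases i <;> fin_cases j <;> simp [h1, h2]

set_option maxHeartbeats 1000000 in
theorem preserve_tracefree_plane_iff (A : Matrix (Fin 2) (Fin 2) ℝ)
    (hA : IsUnit A.det) :
    Submodule.span ℝ
        ({Aᵀ * !![(1 : ℝ), 0; 0, -1] * A, Aᵀ * !![(0 : ℝ), 1; 1, 0] * A} :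
          Set (Matrix (Fin 2) (Fin 2) ℝ)) =
      Submodule.span ℝ
        ({!![(1 : ℝ), 0; 0, -1], !![(0 : ℝ), 1; 1, 0]} :
          Set (Matrix (Fin 2) (Fin 2) ℝ)) ↔
    ∃ (l : ℝ) (A₀ : Matrix (Fin 2) (Fin 2) ℝ),
      l ≠ 0 ∧ A₀ᵀ * A₀ = 1 ∧ A = l • A₀ := by
  constructor
  · intro hspan
    have m3 : Aᵀ * !![(1 : ℝ), 0; 0, -1] * A ∈ Submodule.span ℝ
        ({!![(1 : ℝ), 0; 0, -1], !![(0 : ℝ), 1; 1, 0]} :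
          Set (Matrix (Fin 2) (Fin 2) ℝ)) := by
      rw [← hspan]; exact Submodule.subset_span (Set.mem_insert _ _)
    have m4 : Aᵀ * !![(0 : ℝ), 1; 1, 0] * A ∈ Submodule.span ℝ
        ({!![(1 : ℝ), 0; 0, -1], !![(0 : ℝ), 1; 1, 0]} :
          Set (Matrix (Fin 2) (Fin 2) ℝ)) := by
      rw [← hspan]
      exact Submodule.subset_span (Set.mem_insert_iff.mpr (Or.inr rfl))
    rw [mem_plane_iff] at m3 m4
    obtain ⟨c1, -⟩ := m3
    obtain ⟨c2, -⟩ := m4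
    simp [Matrix.mul_apply, Fin.sum_univ_two] at c1 c2
    have hdet : A 0 0 * A 1 1 - A 0 1 * A 1 0 ≠ 0 := by
      have h := isUnit_iff_ne_zero.mp hA
      rwa [Matrix.det_fin_two] at h
    have hs : 0 < A 0 0 ^ 2 + A 0 1 ^ 2 := by
      rcases (by positivity : (0:ℝ) ≤ A 0 0 ^ 2 + A 0 1 ^ 2).lt_or_eq with h | h
      · exact h
      · exfalso
        have ha : A 0 0 = 0 := by nlinarith [sq_nonneg (A 0 0), sq_nonneg (A 0 1)]
        have hb : A 0 1 = 0 := by nlinarith [sq_nonneg (A 0 0), sq_nonneg (A 0 1)]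
        exact hdet (by rw [ha, hb]; ring)
    set l := Real.sqrt (A 0 0 ^ 2 + A 0 1 ^ 2) with hldef
    have hl2 : l ^ 2 = A 0 0 ^ 2 + A 0 1 ^ 2 := Real.sq_sqrt hs.le
    have hl0 : l ≠ 0 := (Real.sqrt_pos.mpr hs).ne'
    refine ⟨l, l⁻¹ • A, hl0, ?_, ?_⟩
    · refine mul_eq_one_comm.mp ?_
      ext i j
      fin_cases i <;> fin_cases j <;>
        · simp [Matrix.mul_apply, Fin.sum_univ_two, Matrix.one_apply]
          field_simp
          nlinarith [c1, c2, hl2]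
    · rw [smul_smul, mul_inv_cancel₀ hl0, one_smul]
  · rintro ⟨l, B, hl0, hBo, rfl⟩
    have hBo' : B * Bᵀ = 1 := mul_eq_one_comm.mp hBo
    have e1 : B 0 0 * B 0 0 + B 1 0 * B 1 0 = 1 := by
      have h := congrFun (congrFun hBo 0) 0
      simpa [Matrix.mul_apply, Fin.sum_univ_two, Matrix.one_apply] using h
    have e2 : B 0 0 * B 0 1 + B 1 0 * B 1 1 = 0 := by
      have h := congrFun (congrFun hBo 0) 1
      simpa [Matrix.mul_apply, Fin.sum_univ_two, Matrix.one_apply] using h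
    have e3 : B 0 1 * B 0 1 + B 1 1 * B 1 1 = 1 := by
      have h := congrFun (congrFun hBo 1) 1
      simpa [Matrix.mul_apply, Fin.sum_univ_two, Matrix.one_apply] using h
    have f1 : B 0 0 * B 0 0 + B 0 1 * B 0 1 = 1 := by
      have h := congrFun (congrFun hBo' 0) 0
      simpa [Matrix.mul_apply, Fin.sum_univ_two, Matrix.one_apply] using h
    have f2 : B 0 0 * B 1 0 + B 0 1 * B 1 1 = 0 := by
      have h := congrFun (congrFun hBo' 0) 1
      simpa [Matrix.mul_apply, Fin.sum_univ_two, Matrix.one_apply] using h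
    have f3 : B 1 0 * B 1 0 + B 1 1 * B 1 1 = 1 := by
      have h := congrFun (congrFun hBo' 1) 1
      simpa [Matrix.mul_apply, Fin.sum_univ_two, Matrix.one_apply] using h
    have assoc : ∀ M : Matrix (Fin 2) (Fin 2) ℝ, Bᵀ * (B * M * Bᵀ) * B = M := by
      intro M
      have h : Bᵀ * (B * M * Bᵀ) * B = (Bᵀ * B) * M * (Bᵀ * B) := by noncomm_ring
      rw [h, hBo, one_mul, mul_one]
    have conj : ∀ M : Matrix (Fin 2) (Fin 2) ℝ,
        (l • B)ᵀ * ((l ^ 2)⁻¹ • (B * M * Bᵀ)) * (l • B) = M := by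
      intro M
      simp only [Matrix.transpose_smul, Matrix.smul_mul, Matrix.mul_smul, smul_smul, assoc]
      rw [show l * ((l ^ 2)⁻¹ * l) = 1 by field_simp, one_smul]
    apply le_antisymm
    · rw [Submodule.span_le]
      intro x hx
      simp only [Set.mem_insert_iff, Set.mem_singleton_iff] at hx
      rcases hx with rfl | rfl
      · rw [SetLike.mem_coe, mem_plane_iff]
        constructor
        · simp [Matrix.mul_apply, Fin.sum_univ_two]
          linear_combination l ^ 2 * f1 - l ^ 2 * f3
        · simp [Matrix.mul_apply, Fin.sum_univ_two]
          ring
      · rw [SetLike.mem_coe, mem_plane_iff]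
        constructor
        · simp [Matrix.mul_apply, Fin.sum_univ_two]
          linear_combination 2 * l ^ 2 * f2
        · simp [Matrix.mul_apply, Fin.sum_univ_two]
          ring
    · rw [Submodule.span_le]
      intro x hx
      simp only [Set.mem_insert_iff, Set.mem_singleton_iff] at hx
      rcases hx with rfl | rfl
      · rw [SetLike.mem_coe]
        have hmem : ((l ^ 2)⁻¹ • (B * !![(1 : ℝ), 0; 0, -1] * Bᵀ)) ∈ Submodule.span ℝ
            ({!![(1 : ℝ), 0; 0, -1], !![(0 : ℝ), 1; 1, 0]} :
              Set (Matrix (Fin 2) (Fin 2) ℝ)) := by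
          rw [mem_plane_iff]
          constructor
          · simp [Matrix.mul_apply, Fin.sum_univ_two]
            linear_combination (l ^ 2)⁻¹ * e1 - (l ^ 2)⁻¹ * e3
          · simp [Matrix.mul_apply, Fin.sum_univ_two]
            exact Or.inl (by ring)
        obtain ⟨x, y, hxy⟩ := Submodule.mem_span_pair.mp hmem
        rw [Submodule.mem_span_pair]
        refine ⟨x, y, ?_⟩
        calc x • ((l • B)ᵀ * !![(1 : ℝ), 0; 0, -1] * (l • B)) +
              y • ((l • B)ᵀ * !![(0 : ℝ), 1; 1, 0] * (l • B))
            = (l • B)ᵀ * (x • !![(1 : ℝ), 0; 0, -1] + y • !![(0 : ℝ), 1; 1, 0]) * (l • B) := by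
              simp only [Matrix.mul_add, Matrix.add_mul, Matrix.transpose_smul,
                smul_mul_assoc, mul_smul_comm, smul_smul]
              module
          _ = (l • B)ᵀ * ((l ^ 2)⁻¹ • (B * !![(1 : ℝ), 0; 0, -1] * Bᵀ)) * (l • B) := by
              rw [hxy]
          _ = !![(1 : ℝ), 0; 0, -1] := conj _
      · rw [SetLike.mem_coe]
        have hmem : ((l ^ 2)⁻¹ • (B * !![(0 : ℝ), 1; 1, 0] * Bᵀ)) ∈ Submodule.span ℝ
            ({!![(1 : ℝ), 0; 0, -1], !![(0 : ℝ), 1; 1, 0]} :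
              Set (Matrix (Fin 2) (Fin 2) ℝ)) := by
          rw [mem_plane_iff]
          constructor
          · simp [Matrix.mul_apply, Fin.sum_univ_two]
            linear_combination 2 * (l ^ 2)⁻¹ * e2
          · simp [Matrix.mul_apply, Fin.sum_univ_two]
            exact Or.inl (by ring)
        obtain ⟨x, y, hxy⟩ := Submodule.mem_span_pair.mp hmem
        rw [Submodule.mem_span_pair]
        refine ⟨x, y, ?_⟩
        calc x • ((l • B)ᵀ * !![(1 : ℝ), 0; 0, -1] * (l • B)) +
              y • ((l • B)ᵀ * !![(0 : ℝ), 1; 1, 0] * (l • B))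
            = (l • B)ᵀ * (x • !![(1 : ℝ), 0; 0, -1] + y • !![(0 : ℝ), 1; 1, 0]) * (l • B) := by
              simp only [Matrix.mul_add, Matrix.add_mul, Matrix.transpose_smul,
                smul_mul_assoc, mul_smul_comm, smul_smul]
              module
          _ = (l • B)ᵀ * ((l ^ 2)⁻¹ • (B * !![(0 : ℝ), 1; 1, 0] * Bᵀ)) * (l • B) := by
              rw [hxy]
          _ = !![(0 : ℝ), 1; 1, 0] := conj _
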